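/- arXiv:2511.06671 — 2 statements merged into one kernel-verified Lean document; each statement's English description precedes it below -/
import Mathlib

section
/- Let $\sigma' \in (0,1)$, $a \in (0,1)$, $N \geq 1$, and let $q > \frac{2}{1-\sigma'}$ be large enough that $(1-a)^{q\sigma'+2-q} - q(N-1)(1-a) - q(q-1) \geq 0$. Then the radial function $\overline{w}(x) = ((|x|-a)_+)^q$ on the unit ball $B_1(0) \subset \mathbb{R}^N$ is of class $C^2$, vanishes identically on $B_a(0)$, equals $(1-a)^q$ on $\partial B_1(0)$, and satisfies $-\Delta \overline{w} + \overline{w}^{\sigma'} \geq 0$ pointwise in $B_1(0)$. -/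
open Real Set Filter

lemma hasDerivAt_maxpow {p : ℝ} (hp : 1 < p) (s : ℝ) :
    HasDerivAt (fun t : ℝ => (max t 0) ^ p) (p * (max s 0) ^ (p - 1)) s := by
  rcases lt_trichotomy s 0 with hs | hs | hs
  · have h0 : (max s 0 : ℝ) = 0 := max_eq_right hs.le
    rw [h0, Real.zero_rpow (by linarith : p - 1 ≠ 0), mul_zero]
    have : (fun t : ℝ => (max t 0) ^ p) =ᶠ[nhds s] fun _ => (0:ℝ) ^ p := by
      filter_upwards [Iio_mem_nhds hs] with t ht
      rw [max_eq_right (le_of_lt ht)]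
    exact (hasDerivAt_const s ((0:ℝ) ^ p)).congr_of_eventuallyEq this
  · subst hs
    have h0 : (max (0:ℝ) 0 : ℝ) = 0 := max_self 0
    rw [h0, Real.zero_rpow (by linarith : p - 1 ≠ 0), mul_zero]
    rw [hasDerivAt_iff_tendsto_slope]
    have hb : ∀ t : ℝ, ‖slope (fun t : ℝ => (max t 0) ^ p) 0 t‖ ≤ |t| ^ (p - 1) := by
      intro t
      rw [slope_def_field]
      rcases le_or_gt t 0 with ht | ht
      · simp only [max_eq_right ht, max_self, Real.zero_rpow (by linarith : p ≠ 0)]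
        simp [Real.rpow_nonneg (abs_nonneg t)]
      · rw [max_eq_left ht.le, max_self, Real.zero_rpow (by linarith : p ≠ 0), sub_zero,
          sub_zero, abs_of_pos ht]
        rw [Real.norm_eq_abs, abs_div, abs_of_nonneg (Real.rpow_nonneg ht.le p),
          abs_of_pos ht, Real.rpow_sub ht, Real.rpow_one]
    have hlim : Tendsto (fun t : ℝ => |t| ^ (p - 1)) (nhds (0:ℝ)) (nhds (0:ℝ)) := by
      have h1 : ContinuousAt (fun x : ℝ => x ^ (p - 1)) 0 :=
        Real.continuousAt_rpow_const 0 (p - 1) (Or.inr (by linarith))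
      have h1' : ContinuousAt (fun x : ℝ => x ^ (p - 1)) |(0:ℝ)| := by
        rw [abs_zero]; exact h1
      have h2 : ContinuousAt (fun t : ℝ => |t| ^ (p - 1)) 0 :=
        h1'.comp continuous_abs.continuousAt
      have h2 := h2.tendsto
      simpa [Real.zero_rpow (by linarith : p - 1 ≠ 0)] using h2
    exact squeeze_zero_norm hb (hlim.mono_left nhdsWithin_le_nhds)
  · have h0 : (max s 0 : ℝ) = s := max_eq_left hs.le
    rw [h0]
    have : (fun t : ℝ => t ^ p) =ᶠ[nhds s] fun t : ℝ => (max t 0) ^ p := by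
      filter_upwards [Ioi_mem_nhds hs] with t ht
      rw [max_eq_left (le_of_lt ht)]
    exact (Real.hasDerivAt_rpow_const (Or.inl hs.ne')).congr_of_eventuallyEq this.symm

lemma contDiff_two_maxpow {q : ℝ} (hq : 2 < q) :
    ContDiff ℝ 2 (fun t : ℝ => (max t 0) ^ q) := by
  have hd1 : deriv (fun t : ℝ => (max t 0) ^ q) = fun s => q * (max s 0) ^ (q - 1) :=
    funext fun s => (hasDerivAt_maxpow (by linarith) s).deriv
  rw [show (2 : WithTop ℕ∞) = 1 + 1 from rfl, contDiff_succ_iff_deriv]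
  refine ⟨fun s => (hasDerivAt_maxpow (by linarith) s).differentiableAt, by simp, ?_⟩
  rw [hd1, contDiff_one_iff_deriv]
  constructor
  · exact fun s => ((hasDerivAt_maxpow (by linarith : (1:ℝ) < q - 1) s).const_mul q).differentiableAt
  · have hd2 : deriv (fun s : ℝ => q * (max s 0) ^ (q - 1)) =
        fun s => q * ((q - 1) * (max s 0) ^ (q - 1 - 1)) :=
      funext fun s => (((hasDerivAt_maxpow (by linarith : (1:ℝ) < q - 1) s)).const_mul q).deriv
    rw [hd2]
    have : Continuous fun s : ℝ => (max s 0) ^ (q - 1 - 1) :=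
      (continuous_id.max continuous_const).rpow_const (fun x => Or.inr (by linarith))
    exact continuous_const.mul (continuous_const.mul this)

theorem stmt_0 (N : ℕ) (hN : 1 ≤ N) (σ' a q : ℝ)
    (hσ : σ' ∈ Set.Ioo (0:ℝ) 1) (ha : a ∈ Set.Ioo (0:ℝ) 1)
    (hq : q > 2 / (1 - σ'))
    (hq2 : (1 - a) ^ (q * σ' + 2 - q) - q * ((N:ℝ) - 1) * (1 - a) - q * (q - 1) ≥ 0)
    (g : ℝ → ℝ) (hg : g = fun r => (max (r - a) 0) ^ q)
    (w : EuclideanSpace ℝ (Fin N) → ℝ) (hw : w = fun x => g ‖x‖) :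
    ContDiff ℝ 2 w ∧
    (∀ x : EuclideanSpace ℝ (Fin N), ‖x‖ ≤ a → w x = 0) ∧
    (∀ x : EuclideanSpace ℝ (Fin N), ‖x‖ = 1 → w x = (1 - a) ^ q) ∧
    (∀ r ∈ Set.Ioo a 1,
      0 ≤ -(deriv (deriv g) r + ((N:ℝ) - 1) / r * deriv g r) + (g r) ^ σ') := by
  obtain ⟨hσ0, hσ1⟩ := hσ
  obtain ⟨ha0, ha1⟩ := ha
  have h1σ : (0:ℝ) < 1 - σ' := by linarith
  have hqσ : 2 < q * (1 - σ') := by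
    rw [gt_iff_lt, div_lt_iff₀ h1σ] at hq; linarith
  have hq0 : 0 < q := by nlinarith
  have hq' : 2 < q := by nlinarith
  have hgC : ContDiff ℝ 2 g := by
    rw [hg]
    exact (contDiff_two_maxpow hq').comp (contDiff_id.sub contDiff_const)
  refine ⟨?_, ?_, ?_, ?_⟩
  · refine contDiff_iff_contDiffAt.mpr fun x => ?_
    rcases lt_or_ge ‖x‖ a with hx | hx
    · have hev : w =ᶠ[nhds x] fun _ => (0:ℝ) := by
        have ho : IsOpen {y : EuclideanSpace ℝ (Fin N) | ‖y‖ < a} :=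
          isOpen_lt continuous_norm continuous_const
        filter_upwards [ho.mem_nhds hx] with y hy
        rw [hw, hg]
        simp only
        rw [max_eq_right (by simpa using le_of_lt hy : ‖y‖ - a ≤ 0),
          Real.zero_rpow (by linarith : q ≠ 0)]
      exact (contDiffAt_const (c := (0:ℝ))).congr_of_eventuallyEq hev
    · have hx0 : x ≠ 0 := by
        intro h
        rw [h, norm_zero] at hx; linarith
      rw [hw]
      exact hgC.contDiffAt.comp x (contDiffAt_norm ℝ hx0)
  · intro x hx
    rw [hw, hg]
    simp only
    rw [max_eq_right (by linarith : ‖x‖ - a ≤ 0), Real.zero_rpow (by linarith : q ≠ 0)]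
  · intro x hx
    rw [hw, hg]
    simp only [hx]
    rw [max_eq_left (by linarith : (0:ℝ) ≤ 1 - a)]
  · rintro r ⟨hra, hr1⟩
    have hs0 : (0:ℝ) < r - a := by linarith
    have hd1 : ∀ t : ℝ, HasDerivAt g (q * (max (t - a) 0) ^ (q - 1)) t := by
      intro t
      rw [hg]
      have h := (hasDerivAt_maxpow (by linarith : (1:ℝ) < q) (t - a)).comp t
        ((hasDerivAt_id t).sub_const a)
      simpa [Function.comp_def] using h
    have gd : deriv g = fun t => q * (max (t - a) 0) ^ (q - 1) := funext fun t => (hd1 t).deriv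
    have hd2 : HasDerivAt (deriv g) (q * ((q - 1) * (max (r - a) 0) ^ (q - 1 - 1))) r := by
      rw [gd]
      have h := ((hasDerivAt_maxpow (by linarith : (1:ℝ) < q - 1) (r - a)).comp r
        ((hasDerivAt_id r).sub_const a)).const_mul q
      simpa [Function.comp, mul_assoc] using h
    have e2 : deriv (deriv g) r = q * ((q - 1) * (r - a) ^ (q - 2)) := by
      rw [hd2.deriv, max_eq_left hs0.le, show q - 1 - 1 = q - 2 by ring]
    have e1 : deriv g r = q * (r - a) ^ (q - 1) := by
      rw [gd]; simp only; rw [max_eq_left hs0.le]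
    rw [e1, e2, hg]
    simp only
    rw [max_eq_left hs0.le]
    have hA : ((r - a) ^ q) ^ σ' = (r - a) ^ (q * σ') := (Real.rpow_mul hs0.le q σ').symm
    have hB : (r - a) ^ (q * σ') = (r - a) ^ (q * σ' + 2 - q) * (r - a) ^ (q - 2) := by
      rw [← Real.rpow_add hs0]; ring_nf
    have hC : (r - a) ^ (q - 1) = (r - a) * (r - a) ^ (q - 2) := by
      conv_lhs => rw [show q - 1 = 1 + (q - 2) by ring]
      rw [Real.rpow_add hs0, Real.rpow_one]
    have hD : (1 - a) ^ (q * σ' + 2 - q) ≤ (r - a) ^ (q * σ' + 2 - q) :=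
      Real.rpow_le_rpow_of_nonpos hs0 (by linarith) (by nlinarith)
    have hP : 0 < (r - a) ^ (q - 2) := Real.rpow_pos_of_pos hs0 _
    have hX : (0:ℝ) ≤ (N:ℝ) - 1 := by
      have : (1:ℝ) ≤ (N:ℝ) := by exact_mod_cast hN
      linarith
    have hE : ((N:ℝ) - 1) / r * (r - a) ≤ ((N:ℝ) - 1) * (1 - a) := by
      rw [div_mul_eq_mul_div, div_le_iff₀ (by linarith : (0:ℝ) < r)]
      have hra' : r - a ≤ (1 - a) * r := by nlinarith [mul_lt_mul_of_pos_left hr1 ha0]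
      calc ((N:ℝ) - 1) * (r - a) ≤ ((N:ℝ) - 1) * ((1 - a) * r) :=
            mul_le_mul_of_nonneg_left hra' hX
        _ = ((N:ℝ) - 1) * (1 - a) * r := by ring
    rw [hA, hB, hC]
    nlinarith [mul_le_mul_of_nonneg_right hD hP.le, mul_nonneg hq2 hP.le,
      mul_le_mul_of_nonneg_right hE (by positivity : (0:ℝ) ≤ q * (r - a) ^ (q - 2))]
end

section
/- Let $H$ be a Hilbert space, $E \subset H$ a closed subspace, and $L : H \to H$ a bounded self-adjoint operator. Suppose there exist a decomposition of every $\varphi \in E$ as $\varphi = \varphi_1 + \varphi_2$ with $\varphi_1, \varphi_2 \in E$, $\|\varphi_1\| + \|\varphi_2\| \leq 2\|\varphi\|$, and constants $\varrho > 0$, $\epsilon_1, \epsilon_2 \geq 0$ with $8(\epsilon_1 + \epsilon_2) < \min\{\varrho, 1\}$ such that for all $\varphi \in E$: (i) $\langle L\varphi, \varphi_2 \rangle \geq \frac{1}{2}\|\varphi_2\|^2 - \epsilon_1 \|\varphi\|^2$, and (ii) $\|L\varphi\| \geq \varrho\|\varphi_1\| - \epsilon_2\|\varphi\|$. Then $\|L\varphi\|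 \geq \frac{1}{16}\min\{\varrho, 1\}\|\varphi\|$ for all $\varphi \in E$, so $L|_E$ is injective with closed range. -/
lemma stmt_16_aux (ϱ ε1 ε2 a b c l : ℝ) (hϱ : 0 < ϱ) (hε1 : 0 ≤ ε1) (hε2 : 0 ≤ ε2)
    (hsmall : 8 * (ε1 + ε2) < min ϱ 1)
    (ha : 0 ≤ a) (hb : 0 ≤ b) (hc : 0 ≤ c) (hl : 0 ≤ l)
    (hcab : c ≤ a + b)
    (hlb : (1/2) * b ^ 2 - ε1 * c ^ 2 ≤ l * b)
    (hii : ϱ * a - ε2 * c ≤ l) :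
    (1/16) * min ϱ 1 * c ≤ l := by
  have hm0 : 0 < min ϱ 1 := lt_min hϱ one_pos
  have hmϱ : min ϱ 1 ≤ ϱ := min_le_left _ _
  have hm1 : min ϱ 1 ≤ (1:ℝ) := min_le_right _ _
  set m := min ϱ 1 with hm
  clear_value m
  by_cases hcase : b ≤ 8 * l
  · have h1 : ϱ * c ≤ ϱ * (a + b) := mul_le_mul_of_nonneg_left hcab hϱ.le
    have h2 : ϱ * b ≤ ϱ * (8 * l) := mul_le_mul_of_nonneg_left hcase hϱ.le
    have H : ϱ * c ≤ l + ε2 * c + 8 * ϱ * l := by nlinarith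
    nlinarith [mul_nonneg (by linarith : (0:ℝ) ≤ ϱ - m) hc,
      mul_nonneg (by linarith : (0:ℝ) ≤ m - 8*ε2) hc,
      mul_nonneg (by linarith : (0:ℝ) ≤ 1 - m) (mul_nonneg hϱ.le hc),
      mul_nonneg hϱ.le hl, mul_nonneg hl hc, mul_nonneg hϱ.le hc]
  · push_neg at hcase
    have hlb2 : l * b ≤ (1/8) * b * b := by nlinarith
    have h3 : 3 * b^2 ≤ 8 * ε1 * c^2 := by nlinarith
    have h4 : 25 * b^2 ≤ 9 * c^2 := by
      nlinarith [mul_nonneg hc hc, mul_nonneg (by linarith : (0:ℝ) ≤ m - 8*ε1) (mul_nonneg hc hc)]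
    have h5 : 5 * b ≤ 3 * c := by
      nlinarith [mul_nonneg hb hc, sq_nonneg (5*b - 3*c), sq_nonneg (5*b + 3*c)]
    nlinarith [mul_le_mul_of_nonneg_left (by linarith : c - b ≤ a) hϱ.le,
      mul_nonneg hϱ.le (by linarith : (0:ℝ) ≤ 3*c - 5*b),
      mul_nonneg (by linarith : (0:ℝ) ≤ m - 8*ε2) hc,
      mul_nonneg (by linarith : (0:ℝ) ≤ ϱ - m) hc]

theorem stmt_16 {H : Type*} [NormedAddCommGroup H] [InnerProductSpace ℝ H]
    [CompleteSpace H]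
    (E : Submodule ℝ H) (hE : IsClosed (E : Set H))
    (L : H →L[ℝ] H) (hLsa : ∀ x y : H, (inner ℝ (L x) y : ℝ) = inner ℝ x (L y))
    (ϱ ε1 ε2 : ℝ) (hϱ : 0 < ϱ) (hε1 : 0 ≤ ε1) (hε2 : 0 ≤ ε2)
    (hsmall : 8 * (ε1 + ε2) < min ϱ 1)
    (hdec : ∀ φ ∈ E, ∃ φ1 φ2 : H, φ1 ∈ E ∧ φ2 ∈ E ∧ φ = φ1 + φ2 ∧
      ‖φ1‖ + ‖φ2‖ ≤ 2 * ‖φ‖ ∧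
      (inner ℝ (L φ) φ2 : ℝ) ≥ (1/2) * ‖φ2‖ ^ 2 - ε1 * ‖φ‖ ^ 2 ∧
      ‖L φ‖ ≥ ϱ * ‖φ1‖ - ε2 * ‖φ‖) :
    (∀ φ ∈ E, (1/16) * min ϱ 1 * ‖φ‖ ≤ ‖L φ‖) ∧
    (∀ φ ∈ E, ∀ ψ ∈ E, L φ = L ψ → φ = ψ) ∧
    IsClosed (L '' (E : Set H)) := by
  have hm0 : 0 < min ϱ 1 := lt_min hϱ one_pos
  have key : ∀ φ ∈ E, (1/16) * min ϱ 1 * ‖φ‖ ≤ ‖L φ‖ := by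
    intro φ hφ
    obtain ⟨φ1, φ2, -, -, hsum, -, hi, hii⟩ := hdec φ hφ
    have hcab : ‖φ‖ ≤ ‖φ1‖ + ‖φ2‖ := by rw [hsum]; exact norm_add_le _ _
    have hCS : (inner ℝ (L φ) φ2 : ℝ) ≤ ‖L φ‖ * ‖φ2‖ := real_inner_le_norm _ _
    exact stmt_16_aux ϱ ε1 ε2 ‖φ1‖ ‖φ2‖ ‖φ‖ ‖L φ‖ hϱ hε1 hε2 hsmall
      (norm_nonneg _) (norm_nonneg _) (norm_nonneg _) (norm_nonneg _)
      hcab (le_trans hi hCS) hii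
  refine ⟨key, ?_, ?_⟩
  · intro φ hφ ψ hψ hL
    have hsub := key (φ - ψ) (E.sub_mem hφ hψ)
    rw [map_sub, hL, sub_self, norm_zero] at hsub
    have h0 : ‖φ - ψ‖ ≤ 0 := by nlinarith [norm_nonneg (φ - ψ)]
    exact sub_eq_zero.mp (norm_le_zero_iff.mp h0)
  · haveI : CompleteSpace E := hE.completeSpace_coe
    have hK : AntilipschitzWith (⟨16 / min ϱ 1, by positivity⟩ : NNReal)
        (fun x : E => L x) := by
      apply AntilipschitzWith.of_le_mul_dist
      intro x y
      have hxy := key ((x:H) - y) (E.sub_mem x.2 y.2)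
      rw [map_sub] at hxy
      rw [Subtype.dist_eq, dist_eq_norm, dist_eq_norm]
      change ‖_‖ ≤ (16 / min ϱ 1) * ‖_‖
      rw [div_mul_eq_mul_div, le_div_iff₀ hm0]
      nlinarith [norm_nonneg ((x:H) - (y:H)), norm_nonneg (L x - L y)]
    have hUC : UniformContinuous (fun x : E => L x) :=
      L.uniformContinuous.comp uniformContinuous_subtype_val
    have hcl := hK.isClosed_range hUC
    have hrange : Set.range (fun x : E => L x) = L '' (E : Set H) := by
      ext y; simp [Set.range, SetLike.mem_coe]
    rwa [hrange] at hcl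
end
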